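/- Let 𝒞 be a fully ≼₀-compatible counter system, 𝒞_α its 01-counter system, and φ a cardinality constraint. If an abstract configuration (c,v̂) with (c,v̂) ⊨ φ_α is reachable in 𝒞_α, then there exists a configuration (c,v) with α(c,v) = (c,v̂), (c,v) ⊨ φ, and (c,v) reachable in 𝒞. -/
import Mathlib


namespace CS01

variable {C Q A : Type*}

/-- Configurations of a counter system: a controller state and a counter vector. -/
abbrev Conf (C Q : Type*) := C × (Q → ℕ)

/-- The order `≼₀`: same controller state, pointwise smaller counters,
and the same zero pattern. -/
def Le0 (x y : Conf C Q) : Prop :=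
  x.1 = y.1 ∧ (∀ q, x.2 q ≤ y.2 q) ∧ ∀ q, (x.2 q = 0 ↔ y.2 q = 0)

/-- The product order `≼₀ × ≼₀` on pairs of configurations. -/
def ProdLe0 (s t : Conf C Q × Conf C Q) : Prop :=
  Le0 s.1 t.1 ∧ Le0 s.2 t.2

/-- The abstraction `α`, mapping a configuration to its 01-abstraction. -/
def alpha (x : Conf C Q) : Conf C Q :=
  (x.1, fun q => if x.2 q = 0 then 0 else 1)

/-- Forward `≼₀`-compatibility of a step relation. -/
def FwdCompat (T : Set (Conf C Q × Conf C Q)) : Prop :=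
  ∀ x y d, (x, y) ∈ T → Le0 x d → ∃ d', (d, d') ∈ T ∧ Le0 y d'

/-- Backward `≼₀`-compatibility of a step relation. -/
def BwdCompat (T : Set (Conf C Q × Conf C Q)) : Prop :=
  ∀ x y d', (x, y) ∈ T → Le0 y d' → ∃ d, (d, d') ∈ T ∧ Le0 x d

/-- Steps of a counter system are size-preserving. -/
def SizePreserving [Fintype Q] (T : Set (Conf C Q × Conf C Q)) : Prop :=
  ∀ t ∈ T, ∑ q, t.1.2 q = ∑ q, t.2.2 q

/-- A step of the 01-counter system `𝒞_α`. -/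
def AbsStep (T : Set (Conf C Q × Conf C Q)) (x' y' : Conf C Q) : Prop :=
  ∃ t ∈ T, alpha t.1 = x' ∧ alpha t.2 = y'

/-- A finite run of the counter system, starting in an initial configuration. -/
def IsRun (T : Set (Conf C Q × Conf C Q)) (c0 : C) (Q0 : Set Q)
    {n : ℕ} (ρ : Fin (n + 1) → Conf C Q) : Prop :=
  (ρ 0).1 = c0 ∧ (∀ q ∉ Q0, (ρ 0).2 q = 0) ∧
    ∀ i : Fin n, (ρ i.castSucc, ρ i.succ) ∈ T

/-- A finite run of the 01-counter system, starting in an initial (0/1-valued)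
abstract configuration. -/
def IsAbsRun (T : Set (Conf C Q × Conf C Q)) (c0 : C) (Q0 : Set Q)
    {n : ℕ} (σ : Fin (n + 1) → Conf C Q) : Prop :=
  (σ 0).1 = c0 ∧ (∀ q, (σ 0).2 q ≤ 1) ∧ (∀ q ∉ Q0, (σ 0).2 q = 0) ∧
    ∀ i : Fin n, AbsStep T (σ i.castSucc) (σ i.succ)

/-- Reachability in the counter system. -/
def Reach (T : Set (Conf C Q × Conf C Q)) (c0 : C) (Q0 : Set Q)
    (x : Conf C Q) : Prop :=
  ∃ (n : ℕ) (ρ : Fin (n + 1) → Conf C Q), IsRun T c0 Q0 ρ ∧ ρ (Fin.last n) = x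

/-- Reachability in the 01-counter system. -/
def AbsReach (T : Set (Conf C Q × Conf C Q)) (c0 : C) (Q0 : Set Q)
    (x : Conf C Q) : Prop :=
  ∃ (n : ℕ) (σ : Fin (n + 1) → Conf C Q), IsAbsRun T c0 Q0 σ ∧ σ (Fin.last n) = x

/-- The counter vector obtained when `i` processes move from `p` to `p'`. -/
def moveN [DecidableEq Q] (v : Q → ℕ) (p p' : Q) (i : ℕ) : Q → ℕ :=
  fun q => v q - (if q = p then i else 0) + (if q = p' then i else 0)

/-- Cardinality constraints. -/
inductive CC (C Q : Type*) where
  | ctrlEq : C → CC C Q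
  | ctrlNe : C → CC C Q
  | geq : Q → ℕ → CC C Q
  | eqZero : Q → CC C Q
  | and : CC C Q → CC C Q → CC C Q
  | or : CC C Q → CC C Q → CC C Q

/-- Satisfaction of a cardinality constraint by a configuration. -/
def CC.Sat : CC C Q → Conf C Q → Prop
  | .ctrlEq c, x => x.1 = c
  | .ctrlNe c, x => x.1 ≠ c
  | .geq q a, x => a ≤ x.2 q
  | .eqZero q, x => x.2 q = 0
  | .and φ ψ, x => φ.Sat x ∧ ψ.Sat x
  | .or φ ψ, x => φ.Sat x ∨ ψ.Sat x

/-- `φ_α`: replace every atom `#q ≥ a` with `a ≥ 1` by `#q ≥ 1`. -/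
def CC.abs : CC C Q → CC C Q
  | .geq q a => .geq q (min a 1)
  | .and φ ψ => .and φ.abs ψ.abs
  | .or φ ψ => .or φ.abs ψ.abs
  | .ctrlEq c => .ctrlEq c
  | .ctrlNe c => .ctrlNe c
  | .eqZero q => .eqZero q

/-- Maximal constant of a cardinality constraint. -/
def maxConst : CC C Q → ℕ
  | .geq _ a => a
  | .and φ ψ => max (maxConst φ) (maxConst ψ)
  | .or φ ψ => max (maxConst φ) (maxConst ψ)
  | _ => 0

lemma alpha_eq_iff {a b : Conf C Q} (h : alpha a = alpha b) :
    a.1 = b.1 ∧ ∀ q, (a.2 q = 0 ↔ b.2 q = 0) := by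
  refine ⟨(Prod.ext_iff.mp h).1, fun q => ?_⟩
  have h2 := congrFun (congrArg Prod.snd h) q
  simp only [alpha] at h2
  by_cases ha : a.2 q = 0 <;> by_cases hb : b.2 q = 0 <;>
    simp [ha, hb] at h2 ⊢

lemma alpha_eq_of_le0 {a b : Conf C Q} (h : Le0 a b) : alpha a = alpha b := by
  obtain ⟨h1, _, h3⟩ := h
  refine Prod.ext h1 (funext fun q => ?_)
  simp only [alpha]
  by_cases hz : a.2 q = 0
  · rw [if_pos hz, if_pos ((h3 q).mp hz)]
  · rw [if_neg hz, if_neg (fun hb0 => hz ((h3 q).mpr hb0))]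

lemma reach_snoc {T : Set (Conf C Q × Conf C Q)} {c0 : C} {Q0 : Set Q}
    {z w : Conf C Q} (hz : Reach T c0 Q0 z) (hstep : (z, w) ∈ T) :
    Reach T c0 Q0 w := by
  obtain ⟨m, ρ, ⟨hc, h0, hT⟩, hlast⟩ := hz
  refine ⟨m + 1, Fin.snoc ρ w, ⟨?_, ?_, ?_⟩, ?_⟩
  · rw [show (0 : Fin (m + 2)) = Fin.castSucc 0 by rfl, Fin.snoc_castSucc]
    exact hc
  · intro q hq
    rw [show (0 : Fin (m + 2)) = Fin.castSucc 0 by rfl, Fin.snoc_castSucc]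
    exact h0 q hq
  · intro i
    refine Fin.lastCases ?_ (fun j => ?_) i
    · rw [Fin.succ_last, Fin.snoc_last, Fin.snoc_castSucc, hlast]
      exact hstep
    · rw [Fin.succ_castSucc, Fin.snoc_castSucc, Fin.snoc_castSucc]
      exact hT j
  · rw [Fin.snoc_last]

lemma key [Fintype Q] (T : Set (Conf C Q × Conf C Q)) (hsize : SizePreserving T)
    (hf : FwdCompat T) (hb : BwdCompat T) (c0 : C) (Q0 : Set Q) :
    ∀ (n : ℕ) (σ : Fin (n + 1) → Conf C Q), IsAbsRun T c0 Q0 σ → ∀ K : ℕ,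
      ∃ x : Conf C Q, alpha x = σ (Fin.last n) ∧ (∀ q, x.2 q ≠ 0 → K ≤ x.2 q) ∧
        Reach T c0 Q0 x := by
  intro n
  induction n with
  | zero =>
    intro σ hσ K
    obtain ⟨hc, hle, hz0, _⟩ := hσ
    have hlast0 : Fin.last 0 = (0 : Fin 1) := rfl
    refine ⟨((σ 0).1, fun q => (K + 1) * (σ 0).2 q), ?_, ?_, ?_⟩
    · rw [hlast0]
      refine Prod.ext rfl (funext fun q => ?_)
      simp only [alpha]
      rcases Nat.le_one_iff_eq_zero_or_eq_one.mp (hle q) with h | h <;> simp [h]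
    · intro q hq
      have h1 : (σ 0).2 q ≠ 0 := by
        intro h; exact hq (by simp [h])
      calc K ≤ K + 1 := Nat.le_succ K
        _ = (K + 1) * 1 := (mul_one _).symm
        _ ≤ (K + 1) * (σ 0).2 q := Nat.mul_le_mul_left _ (Nat.one_le_iff_ne_zero.mpr h1)
    · exact ⟨0, fun _ => ((σ 0).1, fun q => (K + 1) * (σ 0).2 q),
        ⟨hc, fun q hq => by simp [hz0 q hq], fun i => i.elim0⟩, rfl⟩
  | succ n ih =>
    intro σ hσ K
    obtain ⟨hc, hle, hz0, hT⟩ := hσ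
    -- the restricted abstract run
    set σ' : Fin (n + 1) → Conf C Q := fun i => σ i.castSucc with hσ'
    have hσ'run : IsAbsRun T c0 Q0 σ' := by
      refine ⟨hc, hle, hz0, fun i => ?_⟩
      have := hT i.castSucc
      rwa [Fin.succ_castSucc] at this
    -- the last abstract step and its concrete witness
    obtain ⟨⟨x, y⟩, hxyT, hax, hay⟩ := hT (Fin.last n)
    have hax' : alpha x = σ' (Fin.last n) := hax
    rw [Fin.succ_last] at hay
    -- big target configuration above y
    set w' : Conf C Q := (y.1, fun q => if y.2 q = 0 then 0 else y.2 q + K) with hw'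
    have hyw' : Le0 y w' := by
      refine ⟨rfl, fun q => ?_, fun q => ?_⟩
      · simp only [hw']
        by_cases h : y.2 q = 0 <;> simp [h]
      · simp only [hw']
        by_cases h : y.2 q = 0 <;> simp [h]
    set S : ℕ := ∑ q, w'.2 q with hS
    obtain ⟨z, haz, hbig, hzreach⟩ := ih σ' hσ'run S
    -- backward compatibility: predecessor d of w'
    obtain ⟨d, hdT, hxd⟩ := hb x y w' hxyT hyw'
    -- d ≼₀ z
    have hxz := alpha_eq_iff (hax'.trans haz.symm)
    have hdz : Le0 d z := by
      have hsum : ∑ q, d.2 q = ∑ q, w'.2 q := hsize (d, w') hdT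
      refine ⟨hxd.1.symm.trans hxz.1, fun q => ?_, fun q => ?_⟩
      · by_cases hdq : d.2 q = 0
        · simp [hdq]
        · have hxq : x.2 q ≠ 0 := fun h => hdq ((hxd.2.2 q).mp h)
          have hzq : z.2 q ≠ 0 := fun h => hxq ((hxz.2 q).mpr h)
          have h1 : d.2 q ≤ ∑ q, d.2 q := Finset.single_le_sum
            (fun i _ => Nat.zero_le _) (Finset.mem_univ q)
          rw [hsum] at h1
          exact h1.trans (hbig q hzq)
      · rw [← hxd.2.2 q, hxz.2 q]
    -- forward compatibility: successor w'' of z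
    obtain ⟨w'', hw''T, hw'w''⟩ := hf d w' z hdT hdz
    refine ⟨w'', ?_, ?_, reach_snoc hzreach hw''T⟩
    · rw [← alpha_eq_of_le0 hw'w'', ← alpha_eq_of_le0 hyw', hay]
    · intro q hq
      have hw'q : w'.2 q ≠ 0 := fun h => hq ((hw'w''.2.2 q).mp h)
      have hyq : y.2 q ≠ 0 := fun h => hw'q (by simp [hw', h])
      have : w'.2 q = y.2 q + K := by simp [hw', hyq]
      calc K ≤ y.2 q + K := Nat.le_add_left _ _
        _ = w'.2 q := this.symm
        _ ≤ w''.2 q := hw'w''.2.1 q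

lemma sat_lift (K : ℕ) : ∀ (φ : CC C Q) (x : Conf C Q), maxConst φ ≤ K →
    (∀ q, x.2 q ≠ 0 → K ≤ x.2 q) → (CC.abs φ).Sat (alpha x) → φ.Sat x := by
  intro φ
  induction φ with
  | ctrlEq c => intro x _ _ hs; exact hs
  | ctrlNe c => intro x _ _ hs; exact hs
  | geq q a =>
    intro x hK hbig hs
    simp only [CC.abs, CC.Sat] at hs ⊢
    rcases Nat.eq_zero_or_pos a with h | h
    · simp [h]
    · have h1 : min a 1 = 1 := min_eq_right h
      rw [h1] at hs
      have hx : x.2 q ≠ 0 := by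
        intro h0
        simp [alpha, h0] at hs
      calc a = maxConst (.geq q a : CC C Q) := rfl
        _ ≤ K := hK
        _ ≤ x.2 q := hbig q hx
  | eqZero q =>
    intro x _ _ hs
    simp only [CC.abs, CC.Sat, alpha] at hs ⊢
    by_contra h
    simp [h] at hs
  | and φ ψ ihφ ihψ =>
    intro x hK hbig hs
    exact ⟨ihφ x (le_trans (le_max_left _ _) hK) hbig hs.1,
      ihψ x (le_trans (le_max_right _ _) hK) hbig hs.2⟩
  | or φ ψ ihφ ihψ =>
    intro x hK hbig hs
    rcases hs with hs | hs
    · exact Or.inl (ihφ x (le_trans (le_max_left _ _) hK) hbig hs)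
    · exact Or.inr (ihψ x (le_trans (le_max_right _ _) hK) hbig hs)

/-- For a fully `≼₀`-compatible counter system `𝒞` and a
cardinality constraint `φ`, if an abstract configuration satisfying `φ_α` is
reachable in `𝒞_α`, then some configuration mapping to it under `α`, which
satisfies `φ`, is reachable in `𝒞`. -/
theorem stmt10 [Fintype C] [Fintype Q] [Nonempty C] [Nonempty Q]
    (T : Set (Conf C Q × Conf C Q)) (hsize : SizePreserving T)
    (hf : FwdCompat T) (hb : BwdCompat T)
    (c0 : C) (Q0 : Set Q) (φ : CC C Q) (xh : Conf C Q)
    (hreach : AbsReach T c0 Q0 xh) (hsat : (CC.abs φ).Sat xh) :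
    ∃ x : Conf C Q, alpha x = xh ∧ φ.Sat x ∧ Reach T c0 Q0 x := by
  obtain ⟨n, σ, habs, hlast⟩ := hreach
  obtain ⟨x, hax, hbig, hre⟩ := key T hsize hf hb c0 Q0 n σ habs (maxConst φ)
  rw [hlast] at hax
  refine ⟨x, hax, ?_, hre⟩
  exact sat_lift (maxConst φ) φ x le_rfl hbig (hax ▸ hsat)

end CS01
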